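/- arXiv:1706.02942 — 2 statements merged into one kernel-verified Lean document; each statement's English description precedes it below -/
import Mathlib

section
/- Let ζ₀, ζ₁ be real numbers and define ζ(V) = ζ₀ dim V₀ + ζ₁ dim V₁ for a quiver representation V with dimension vector (dim V₀, dim V₁). Let Z(V) = z₀ dim V₀ + z₁ dim V₁ where z₀, z₁ lie in the upper half plane {r e^{iπθ} : r > 0, θ ∈ (0,1]} with arg z_i = ζ_i ∈ (0, π]. Then for nonzero representations V, W, one has ζ(W)/ (dim W₀ + dim W₁) ≤ ζ(V)/(dim V₀ + dim V₁) if and only if arg Z(W) ≤ arg Z(V). -/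
open Real

lemma arg_mem_Ioc {z : ℂ} (him : 0 ≤ z.im) (h : 0 < z.im ∨ z.re < 0) :
    z.arg ∈ Set.Ioc 0 π := by
  refine ⟨?_, Complex.arg_le_pi z⟩
  have h0 : 0 ≤ z.arg := Complex.arg_nonneg_iff.2 him
  rcases h0.lt_or_eq with h1 | h1
  · exact h1
  · exfalso
    rw [eq_comm, Complex.arg_eq_zero_iff] at h1
    rcases h with h | h
    · exact h.ne' h1.2
    · exact absurd h1.1 (not_le.2 h)

lemma arg_le_arg_iff {z w : ℂ} (hz : z.arg ∈ Set.Ioc 0 π) (hw : w.arg ∈ Set.Ioc 0 π) :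
    w.arg ≤ z.arg ↔ 0 ≤ ((starRingEnd ℂ) w * z).im := by
  have hzne : z ≠ 0 := by
    intro h; rw [h, Complex.arg_zero] at hz; exact absurd hz.1 (lt_irrefl 0)
  have hwne : w ≠ 0 := by
    intro h; rw [h, Complex.arg_zero] at hw; exact absurd hw.1 (lt_irrefl 0)
  have haz : (0:ℝ) < ‖z‖ := norm_pos_iff.mpr hzne
  have haw : (0:ℝ) < ‖w‖ := norm_pos_iff.mpr hwne
  have key : ((starRingEnd ℂ) w * z).im = ‖w‖ * ‖z‖ * Real.sin (z.arg - w.arg) := by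
    rw [Real.sin_sub, Complex.sin_arg, Complex.cos_arg hzne, Complex.sin_arg, Complex.cos_arg hwne]
    simp [Complex.mul_im]
    field_simp
    ring
  rw [key]
  rw [mul_nonneg_iff_of_pos_left (mul_pos haw haz)]
  have hd1 : -π < z.arg - w.arg := by linarith [hz.1, hw.2]
  have hd2 : z.arg - w.arg < π := by linarith [hw.1, hz.2]
  constructor
  · intro h; exact Real.sin_nonneg_of_nonneg_of_le_pi (by linarith) hd2.le
  · intro h
    by_contra hlt
    push_neg at hlt
    have : Real.sin (z.arg - w.arg) < 0 := by
      have := Real.sin_pos_of_pos_of_lt_pi (x := -(z.arg - w.arg)) (by linarith) (by linarith)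
      rw [Real.sin_neg] at this; linarith
    linarith

lemma argZ_mem (ζ₀ ζ₁ r₀ r₁ : ℝ)
    (hζ₀ : ζ₀ ∈ Set.Ioc 0 π) (hζ₁ : ζ₁ ∈ Set.Ioc 0 π)
    (hr₀ : 0 < r₀) (hr₁ : 0 < r₁) (a b : ℕ) (h : ¬(a = 0 ∧ b = 0)) :
    ((r₀ : ℂ) * Complex.exp (ζ₀ * Complex.I) * a
      + (r₁ : ℂ) * Complex.exp (ζ₁ * Complex.I) * b).arg ∈ Set.Ioc 0 π := by
  have hs₀ : 0 ≤ Real.sin ζ₀ := Real.sin_nonneg_of_nonneg_of_le_pi hζ₀.1.le hζ₀.2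
  have hs₁ : 0 ≤ Real.sin ζ₁ := Real.sin_nonneg_of_nonneg_of_le_pi hζ₁.1.le hζ₁.2
  have him : ((r₀ : ℂ) * Complex.exp (ζ₀ * Complex.I) * a
      + (r₁ : ℂ) * Complex.exp (ζ₁ * Complex.I) * b).im
      = r₀ * Real.sin ζ₀ * a + r₁ * Real.sin ζ₁ * b := by
    simp [Complex.exp_mul_I, Complex.add_im, Complex.mul_im, Complex.mul_re,
      Complex.sin_ofReal_re, Complex.cos_ofReal_re]
  have hre : ((r₀ : ℂ) * Complex.exp (ζ₀ * Complex.I) * a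
      + (r₁ : ℂ) * Complex.exp (ζ₁ * Complex.I) * b).re
      = r₀ * Real.cos ζ₀ * a + r₁ * Real.cos ζ₁ * b := by
    simp [Complex.exp_mul_I, Complex.add_re, Complex.mul_im, Complex.mul_re,
      Complex.sin_ofReal_re, Complex.cos_ofReal_re]
  have ha' : 0 ≤ r₀ * Real.sin ζ₀ * (a : ℝ) := by positivity
  have hb' : 0 ≤ r₁ * Real.sin ζ₁ * (b : ℝ) := by positivity
  apply arg_mem_Ioc (by rw [him]; linarith)
  by_cases hpos : 0 < r₀ * Real.sin ζ₀ * a + r₁ * Real.sin ζ₁ * b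
  · left; rw [him]; exact hpos
  · right
    push_neg at hpos
    have h0a : r₀ * Real.sin ζ₀ * (a : ℝ) = 0 := le_antisymm (by linarith) ha'
    have h0b : r₁ * Real.sin ζ₁ * (b : ℝ) = 0 := le_antisymm (by linarith) hb'
    have key : ∀ ζ r : ℝ, ζ ∈ Set.Ioc 0 π → 0 < r → ∀ c : ℕ,
        r * Real.sin ζ * c = 0 → r * Real.cos ζ * c = -(r * c) := by
      intro ζ r hζ hr c hc
      rcases Nat.eq_zero_or_pos c with hc0 | hc0
      · simp [hc0]
      · have hcR : (0:ℝ) < c := by exact_mod_cast hc0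
        have hsin : Real.sin ζ = 0 := by
          rcases mul_eq_zero.1 hc with h | h
          · rcases mul_eq_zero.1 h with h | h
            · exact absurd h hr.ne'
            · exact h
          · exact absurd h hcR.ne'
        have hζπ : ζ = π := by
          rcases hζ.2.lt_or_eq with hlt | heq
          · exact absurd hsin (Real.sin_pos_of_pos_of_lt_pi hζ.1 hlt).ne'
          · exact heq
        rw [hζπ, Real.cos_pi]; ring
    rw [hre, key ζ₀ r₀ hζ₀ hr₀ a h0a, key ζ₁ r₁ hζ₁ hr₁ b h0b]
    rcases not_and_or.1 h with ha | hb
    · have : (0:ℝ) < r₀ * a := by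
        have : (0:ℝ) < a := by exact_mod_cast Nat.pos_of_ne_zero ha
        positivity
      have : (0:ℝ) ≤ r₁ * b := by positivity
      linarith
    · have : (0:ℝ) < r₁ * b := by
        have : (0:ℝ) < b := by exact_mod_cast Nat.pos_of_ne_zero hb
        positivity
      have : (0:ℝ) ≤ r₀ * a := by positivity
      linarith

lemma sign_sin_mul {x : ℝ} (h1 : -π < x) (h2 : x < π) (y : ℝ) :
    (0 ≤ x * y ↔ 0 ≤ Real.sin x * y) := by
  rcases lt_trichotomy x 0 with hx | hx | hx
  · have hs : Real.sin x < 0 := by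
      have := Real.sin_pos_of_pos_of_lt_pi (x := -x) (by linarith) (by linarith)
      rw [Real.sin_neg] at this; linarith
    constructor <;> intro h
    · have hy : y ≤ 0 := by nlinarith
      nlinarith
    · have hy : y ≤ 0 := by nlinarith
      nlinarith
  · simp [hx]
  · have hs : 0 < Real.sin x := Real.sin_pos_of_pos_of_lt_pi hx h2
    constructor <;> intro h
    · have hy : 0 ≤ y := by nlinarith
      nlinarith
    · have hy : 0 ≤ y := by nlinarith
      nlinarith

/-- For central charges `z₀ = r₀ e^{iζ₀}`, `z₁ = r₁ e^{iζ₁}` with `r_j > 0` and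
`ζ_j ∈ (0, π]`, and nonzero dimension vectors `(V₀, V₁)`, `(W₀, W₁)`, the normalized
slope `ζ(W)/(W₀+W₁) = (ζ₀W₀+ζ₁W₁)/(W₀+W₁)` and the argument of the central charge
`Z(W) = z₀W₀ + z₁W₁` induce the same ordering:
`ζ(W)/(W₀+W₁) ≤ ζ(V)/(V₀+V₁) ↔ arg Z(W) ≤ arg Z(V)`. -/
theorem slope_iff_arg (ζ₀ ζ₁ r₀ r₁ : ℝ)
    (hζ₀ : ζ₀ ∈ Set.Ioc 0 π) (hζ₁ : ζ₁ ∈ Set.Ioc 0 π)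
    (hr₀ : 0 < r₀) (hr₁ : 0 < r₁)
    (z₀ z₁ : ℂ)
    (hz₀ : z₀ = (r₀ : ℂ) * Complex.exp (ζ₀ * Complex.I))
    (hz₁ : z₁ = (r₁ : ℂ) * Complex.exp (ζ₁ * Complex.I))
    (V₀ V₁ W₀ W₁ : ℕ) (hV : ¬(V₀ = 0 ∧ V₁ = 0)) (hW : ¬(W₀ = 0 ∧ W₁ = 0)) :
    (ζ₀ * W₀ + ζ₁ * W₁) / (W₀ + W₁) ≤ (ζ₀ * V₀ + ζ₁ * V₁) / (V₀ + V₁) ↔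
      (z₀ * W₀ + z₁ * W₁).arg ≤ (z₀ * V₀ + z₁ * V₁).arg := by
  subst hz₀ hz₁
  have hVpos : (0:ℝ) < (V₀ : ℝ) + V₁ := by
    have : 0 < V₀ + V₁ := by omega
    exact_mod_cast this
  have hWpos : (0:ℝ) < (W₀ : ℝ) + W₁ := by
    have : 0 < W₀ + W₁ := by omega
    exact_mod_cast this
  have lhs_iff : (ζ₀ * W₀ + ζ₁ * W₁) / (W₀ + W₁) ≤ (ζ₀ * V₀ + ζ₁ * V₁) / (V₀ + V₁) ↔
      0 ≤ (ζ₁ - ζ₀) * ((V₁ : ℝ) * W₀ - V₀ * W₁) := by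
    rw [div_le_div_iff₀ hWpos hVpos, ← sub_nonneg]
    constructor <;> intro h <;> nlinarith
  rw [lhs_iff,
    arg_le_arg_iff (argZ_mem ζ₀ ζ₁ r₀ r₁ hζ₀ hζ₁ hr₀ hr₁ V₀ V₁ hV)
      (argZ_mem ζ₀ ζ₁ r₀ r₁ hζ₀ hζ₁ hr₀ hr₁ W₀ W₁ hW)]
  have him : ((starRingEnd ℂ)
        ((r₀ : ℂ) * Complex.exp (ζ₀ * Complex.I) * W₀ + (r₁ : ℂ) * Complex.exp (ζ₁ * Complex.I) * W₁)
      * ((r₀ : ℂ) * Complex.exp (ζ₀ * Complex.I) * V₀ + (r₁ : ℂ) * Complex.exp (ζ₁ * Complex.I) * V₁)).im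
      = (r₀ * r₁) * (Real.sin (ζ₁ - ζ₀) * ((V₁ : ℝ) * W₀ - V₀ * W₁)) := by
    simp [Complex.exp_mul_I, Complex.add_im, Complex.add_re, Complex.mul_im, Complex.mul_re,
      Complex.sin_ofReal_re, Complex.cos_ofReal_re, Real.sin_sub]
    ring
  rw [him, mul_nonneg_iff_of_pos_left (mul_pos hr₀ hr₁),
    ← sign_sin_mul (by linarith [hζ₀.2, hζ₁.1]) (by linarith [hζ₀.1, hζ₁.2])]
end

section
/- For m ≥ 1, the map σ : V₊(m) → V₊(m+1) defined on standard basis vectors by σ(e_i) = e_i + e_{i+1} (1 ≤ i ≤ m−1) and σ(f_j) = f_j + f_{j+1} (1 ≤ j ≤ m) is an injective homomorphism of representations of the conifold quiver, and its cokernel is isomorphic to the representation (ℂ, ℂ) with x acting by 1, z acting by −1, and y = w = 0. -/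
/-- The arrow `x` of the representation `V₊(k+1)` of the conifold quiver:
`V₀ = ℂ^k` (basis `e₁,…,e_k`), `V₁ = ℂ^{k+1}` (basis `f₁,…,f_{k+1}`), `x(e_i) = f_i`. -/
def xMap (k : ℕ) : (Fin k → ℂ) →ₗ[ℂ] (Fin (k + 1) → ℂ) where
  toFun v j := if h : (j : ℕ) < k then v ⟨j, h⟩ else 0
  map_add' u v := by funext j; by_cases h : (j : ℕ) < k <;> simp [h]
  map_smul' c v := by funext j; by_cases h : (j : ℕ) < k <;> simp [h]

/-- The arrow `z` of the representation `V₊(k+1)`: `z(e_i) = f_{i+1}`. -/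
def zMap (k : ℕ) : (Fin k → ℂ) →ₗ[ℂ] (Fin (k + 1) → ℂ) where
  toFun v j := if h : 0 < (j : ℕ) then v ⟨(j : ℕ) - 1, by have := j.isLt; omega⟩ else 0
  map_add' u v := by funext j; by_cases h : 0 < (j : ℕ) <;> simp only [h, ↓reduceDIte, Pi.add_apply, Pi.smul_apply, RingHom.id_apply, add_zero, smul_zero]
  map_smul' c v := by funext j; by_cases h : 0 < (j : ℕ) <;> simp only [h, ↓reduceDIte, Pi.add_apply, Pi.smul_apply, RingHom.id_apply, add_zero, smul_zero]

noncomputable def ellF (n : ℕ) : (Fin n → ℂ) →ₗ[ℂ] ℂ where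
  toFun v := ∑ j : Fin n, (-1 : ℂ) ^ (j : ℕ) * v j
  map_add' u v := by simp [mul_add, Finset.sum_add_distrib]
  map_smul' c v := by simp only [Finset.mul_sum, RingHom.id_apply, Pi.smul_apply, smul_eq_mul]; apply Finset.sum_congr rfl; intros; ring

lemma ellF_x (n : ℕ) (v : Fin n → ℂ) : ellF (n + 1) (xMap n v) = ellF n v := by
  simp only [ellF, xMap, LinearMap.coe_mk, AddHom.coe_mk]
  rw [Fin.sum_univ_castSucc]
  simp [Fin.is_lt]

lemma ellF_z (n : ℕ) (v : Fin n → ℂ) : ellF (n + 1) (zMap n v) = -ellF n v := by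
  simp only [ellF, zMap, LinearMap.coe_mk, AddHom.coe_mk]
  rw [Fin.sum_univ_succ]
  rw [← Finset.sum_neg_distrib]
  simp only [Fin.val_succ, Fin.val_zero, lt_irrefl, dif_neg, not_lt, Nat.lt_irrefl]
  erw [dif_neg (Nat.lt_irrefl 0)]
  rw [mul_zero, zero_add]
  apply Finset.sum_congr rfl
  intro j _
  have : (0:ℕ) < (j:ℕ) + 1 := by omega
  simp [this, pow_succ]

lemma sigma_inj (k : ℕ) : Function.Injective (xMap k + zMap k) := by
  rw [← LinearMap.ker_eq_bot]
  ext v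
  simp only [LinearMap.mem_ker, Submodule.mem_bot]
  constructor
  · intro h
    have key : ∀ i (hi : i < k), v ⟨i, hi⟩ = 0 := by
      intro i
      induction i with
      | zero => intro hi
                have := congrFun h ⟨0, by omega⟩
                simpa [xMap, zMap, hi] using this
      | succ n ih => intro hi
                     have := congrFun h ⟨n+1, by omega⟩
                     simp [xMap, zMap, hi, ih (by omega)] at this
                     exact this
    funext i
    exact key i i.isLt
  · rintro rfl; simp

lemma ellF_surj (n : ℕ) : Function.Surjective (ellF (n + 1)) := by
  intro c
  refine ⟨Pi.single 0 c, ?_⟩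
  simp only [ellF, LinearMap.coe_mk, AddHom.coe_mk]
  rw [Fin.sum_univ_succ]
  simp [Pi.single_apply, Fin.succ_ne_zero]

lemma range_eq (k : ℕ) :
    LinearMap.range (xMap k + zMap k) = LinearMap.ker (ellF (k + 1)) := by
  have hle : LinearMap.range (xMap k + zMap k) ≤ LinearMap.ker (ellF (k + 1)) := by
    rintro _ ⟨v, rfl⟩
    simp [LinearMap.mem_ker, map_add, ellF_x, ellF_z]
  apply Submodule.eq_of_le_of_finrank_eq hle
  have h1 : Module.finrank ℂ (LinearMap.range (xMap k + zMap k)) = k := by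
    rw [LinearMap.finrank_range_of_inj (sigma_inj k)]
    simp [Module.finrank_fin_fun]
  have h2 : Module.finrank ℂ (LinearMap.ker (ellF (k + 1))) = k := by
    have := LinearMap.finrank_range_add_finrank_ker (ellF (k + 1))
    rw [LinearMap.range_eq_top.mpr (ellF_surj k)] at this
    simp [Module.finrank_fin_fun] at this
    omega
  rw [h1, h2]

noncomputable def phi (k : ℕ) :
    ((Fin (k + 1) → ℂ) ⧸ LinearMap.range (xMap k + zMap k)) ≃ₗ[ℂ] ℂ :=
  LinearEquiv.ofBijective
    ((LinearMap.range (xMap k + zMap k)).liftQ (ellF (k + 1)) (range_eq k).le)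
    ⟨by
      rw [← LinearMap.ker_eq_bot, Submodule.ker_liftQ_eq_bot]
      exact (range_eq k).ge,
     fun c => by
      obtain ⟨v, hv⟩ := ellF_surj k c
      exact ⟨Submodule.Quotient.mk v, hv⟩⟩

lemma phi_mk (k : ℕ) (v : Fin (k + 1) → ℂ) :
    phi k (Submodule.Quotient.mk (p := LinearMap.range (xMap k + zMap k)) v) =
      ellF (k + 1) v := rfl

lemma comm_x (k : ℕ) :
    (xMap (k + 1)).comp (xMap k + zMap k) = (xMap (k + 1) + zMap (k + 1)).comp (xMap k) := by
  ext v j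
  simp only [LinearMap.comp_apply, LinearMap.add_apply, xMap, zMap, LinearMap.coe_mk,
    AddHom.coe_mk, Pi.add_apply]
  split_ifs <;> simp_all <;> omega

lemma comm_z (k : ℕ) :
    (zMap (k + 1)).comp (xMap k + zMap k) = (xMap (k + 1) + zMap (k + 1)).comp (zMap k) := by
  ext v j
  simp only [LinearMap.comp_apply, LinearMap.add_apply, xMap, zMap, LinearMap.coe_mk,
    AddHom.coe_mk, Pi.add_apply]
  split_ifs <;> simp_all <;> omega

/-- For `m = k+1 ≥ 1`, the map `σ : V₊(m) → V₊(m+1)`, `σ(e_i) = e_i + e_{i+1}`,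
`σ(f_j) = f_j + f_{j+1}` (whose components are `xMap + zMap`) is an injective
homomorphism of representations of the conifold quiver (it intertwines the arrows
`x` and `z`; the arrows `y, w` are zero), and its cokernel is isomorphic to the
representation `(ℂ, ℂ)` on which `x` acts by `1` and `z` acts by `−1` (and `y = w = 0`). -/
theorem sigma_injective_cokernel (k : ℕ) :
    Function.Injective (xMap k + zMap k) ∧
    Function.Injective (xMap (k + 1) + zMap (k + 1)) ∧
    (xMap (k + 1)).comp (xMap k + zMap k) = (xMap (k + 1) + zMap (k + 1)).comp (xMap k) ∧
    (zMap (k + 1)).comp (xMap k + zMap k) = (xMap (k + 1) + zMap (k + 1)).comp (zMap k) ∧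
    ∃ (φ₀ : ((Fin (k + 1) → ℂ) ⧸ LinearMap.range (xMap k + zMap k)) ≃ₗ[ℂ] ℂ)
      (φ₁ : ((Fin (k + 2) → ℂ) ⧸ LinearMap.range (xMap (k + 1) + zMap (k + 1))) ≃ₗ[ℂ] ℂ),
      ∀ v : Fin (k + 1) → ℂ,
        φ₁ (Submodule.Quotient.mk (p := LinearMap.range (xMap (k + 1) + zMap (k + 1)))
              (xMap (k + 1) v))
          = φ₀ (Submodule.Quotient.mk (p := LinearMap.range (xMap k + zMap k)) v) ∧
        φ₁ (Submodule.Quotient.mk (p := LinearMap.range (xMap (k + 1) + zMap (k + 1)))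
              (zMap (k + 1) v))
          = -φ₀ (Submodule.Quotient.mk (p := LinearMap.range (xMap k + zMap k)) v) := by
  refine ⟨sigma_inj k, sigma_inj (k + 1), comm_x k, comm_z k, phi k, phi (k + 1), fun v => ?_⟩
  constructor
  · rw [phi_mk, phi_mk, ellF_x]
  · rw [phi_mk, phi_mk, ellF_z]
end
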